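/- For every η ∈ (0,1) there exists ε₀ > 0 such that for all ε ∈ (0, ε₀): P(D₁·D₂² ≤ ε and D₁²·D₂ ≤ ε) ≤ ε^{1−η}. -/

import Mathlib

open MeasureTheory ProbabilityTheory Real Filter

/-- Density of the Beta distribution `β(u,v)` with respect to Lebesgue measure. -/
noncomputable def betaPDFReal (u v x : ℝ) : ℝ :=
  if 0 < x ∧ x < 1 then
    Real.Gamma (u + v) / (Real.Gamma u * Real.Gamma v) * x ^ (u - 1) * (1 - x) ^ (v - 1)
  else 0

/-- The Beta distribution `β(u,v)` on `ℝ`. -/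
noncomputable def betaMeasure (u v : ℝ) : Measure ℝ :=
  volume.withDensity fun x => ENNReal.ofReal (_root_.betaPDFReal u v x)

/-- Density of the generalized Gamma distribution `GG(u,v)` w.r.t. Lebesgue measure. -/
noncomputable def genGammaPDFReal (u v x : ℝ) : ℝ :=
  if 0 < x then v / Real.Gamma (u / v) * x ^ (u - 1) * Real.exp (-(x ^ v)) else 0

/-- The generalized Gamma distribution `GG(u,v)` on `ℝ`. -/
noncomputable def genGammaMeasure (u v : ℝ) : Measure ℝ :=
  volume.withDensity fun x => ENNReal.ofReal (genGammaPDFReal u v x)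

lemma wd_bound {f : ℝ → ℝ} {S T : Set ℝ} (hS : MeasurableSet S) (hT : MeasurableSet T) (C : ℝ)
    (h : ∀ x ∈ S, ENNReal.ofReal (f x) ≤ T.indicator (fun _ => ENNReal.ofReal C) x) :
    (volume.withDensity fun x => ENNReal.ofReal (f x)) S ≤ ENNReal.ofReal C * volume T := by
  rw [withDensity_apply _ hS]
  calc ∫⁻ x in S, ENNReal.ofReal (f x) ≤ ∫⁻ x in S, T.indicator (fun _ => ENNReal.ofReal C) x :=
        setLIntegral_mono' hS h
    _ ≤ ∫⁻ x, T.indicator (fun _ => ENNReal.ofReal C) x := setLIntegral_le_lintegral _ _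
    _ = ENNReal.ofReal C * volume T := lintegral_indicator_const hT _

lemma wd_zero {f : ℝ → ℝ} {S : Set ℝ} (hS : MeasurableSet S)
    (h : ∀ x ∈ S, f x = 0) :
    (volume.withDensity fun x => ENNReal.ofReal (f x)) S = 0 := by
  rw [withDensity_apply _ hS]
  rw [setLIntegral_congr_fun hS (fun x hx => by rw [h x hx])]
  simp

lemma gamma_three : Real.Gamma 3 = 2 := by
  rw [(by norm_num : (3:ℝ) = 2 + 1), Real.Gamma_add_one (by norm_num),
    (by norm_num : (2:ℝ) = 1 + 1), Real.Gamma_add_one (by norm_num), Real.Gamma_one]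
  norm_num

lemma gamma_four : Real.Gamma 4 = 6 := by
  rw [(by norm_num : (4:ℝ) = 3 + 1), Real.Gamma_add_one (by norm_num), gamma_three]
  norm_num

lemma tail_beta12_low {s : ℝ} (hs : 0 ≤ s) :
    _root_.betaMeasure 1 2 (Set.Iic s) ≤ ENNReal.ofReal (2 * s) := by
  calc _root_.betaMeasure 1 2 (Set.Iic s) ≤ ENNReal.ofReal 2 * volume (Set.Ioc 0 s) := ?_
      _ = ENNReal.ofReal (2 * s) := by
          rw [Real.volume_Ioc, ← ENNReal.ofReal_mul (by norm_num)]
          norm_num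
  refine wd_bound ?ms ?mt _ ?_
  case ms => exact measurableSet_Iic
  case mt => exact measurableSet_Ioc
  · intro x hx
    simp only [Set.mem_Iic] at hx
    unfold _root_.betaPDFReal
    split_ifs with hcond
    · have hx0 : (0:ℝ) < x := hcond.1
      have hx1 : x < 1 := hcond.2
      rw [Set.indicator_of_mem (by exact ⟨hx0, hx⟩)]
      apply ENNReal.ofReal_le_ofReal
      have : Real.Gamma (1 + 2) / (Real.Gamma 1 * Real.Gamma 2) = 2 := by
        rw [(by norm_num : (1:ℝ) + 2 = 3), gamma_three, Real.Gamma_one,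
          (by norm_num : (2:ℝ) = 1 + 1), Real.Gamma_add_one (by norm_num), Real.Gamma_one]
        norm_num
      rw [this]
      have h1 : x ^ (1 - 1 : ℝ) = 1 := by norm_num
      have h2 : (1 - x) ^ (2 - 1 : ℝ) = 1 - x := by norm_num
      rw [h1, h2]
      nlinarith
    · simp

lemma tail_beta12_high {s : ℝ} (hs : 0 ≤ s) :
    _root_.betaMeasure 1 2 (Set.Ici (1 - s)) ≤ ENNReal.ofReal (2 * s) := by
  calc _root_.betaMeasure 1 2 (Set.Ici (1-s)) ≤ ENNReal.ofReal 2 * volume (Set.Ico (1-s) 1) := ?_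
      _ ≤ ENNReal.ofReal (2 * s) := by
          rw [Real.volume_Ico, ← ENNReal.ofReal_mul (by norm_num)]
          apply ENNReal.ofReal_le_ofReal; nlinarith
  refine wd_bound ?ms ?mt _ ?_
  case ms => exact measurableSet_Ici
  case mt => exact measurableSet_Ico
  · intro x hx
    simp only [Set.mem_Ici] at hx
    unfold _root_.betaPDFReal
    split_ifs with hcond
    · rw [Set.indicator_of_mem (by exact ⟨hx, hcond.2⟩)]
      apply ENNReal.ofReal_le_ofReal
      have : Real.Gamma (1 + 2) / (Real.Gamma 1 * Real.Gamma 2) = 2 := by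
        rw [(by norm_num : (1:ℝ) + 2 = 3), gamma_three, Real.Gamma_one,
          (by norm_num : (2:ℝ) = 1 + 1), Real.Gamma_add_one (by norm_num), Real.Gamma_one]
        norm_num
      rw [this]
      have h1 : x ^ (1 - 1 : ℝ) = 1 := by norm_num
      have h2 : (1 - x) ^ (2 - 1 : ℝ) = 1 - x := by norm_num
      rw [h1, h2]
      nlinarith [hcond.1, hcond.2]
    · simp

lemma tail_beta31 {s : ℝ} (hs : 0 < s) :
    _root_.betaMeasure 3 1 (Set.Iic s) ≤ ENNReal.ofReal (3 * s ^ (3:ℝ)) := by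
  calc _root_.betaMeasure 3 1 (Set.Iic s) ≤ ENNReal.ofReal (3 * s^(2:ℝ)) * volume (Set.Ioc 0 s) := ?_
      _ = ENNReal.ofReal (3 * s ^ (3:ℝ)) := by
          rw [Real.volume_Ioc, ← ENNReal.ofReal_mul (by positivity)]
          congr 1
          rw [sub_zero, mul_assoc, show (3:ℝ) = ((3:ℕ):ℝ) by norm_num,
            show (2:ℝ) = ((2:ℕ):ℝ) by norm_num, Real.rpow_natCast, Real.rpow_natCast]
          ring
  refine wd_bound ?ms ?mt _ ?_
  case ms => exact measurableSet_Iic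
  case mt => exact measurableSet_Ioc
  · intro x hx
    simp only [Set.mem_Iic] at hx
    unfold _root_.betaPDFReal
    split_ifs with hcond
    · have hx0 : (0:ℝ) < x := hcond.1
      rw [Set.indicator_of_mem (by exact ⟨hx0, hx⟩)]
      apply ENNReal.ofReal_le_ofReal
      have : Real.Gamma (3 + 1) / (Real.Gamma 3 * Real.Gamma 1) = 3 := by
        rw [(by norm_num : (3:ℝ) + 1 = 4), gamma_four, gamma_three, Real.Gamma_one]
        norm_num
      rw [this]
      have h2 : (1 - x) ^ (1 - 1 : ℝ) = 1 := by norm_num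
      rw [h2, mul_one]
      have : x ^ (3 - 1 : ℝ) ≤ s ^ (2:ℝ) := by
        rw [(by norm_num : (3:ℝ) - 1 = 2)]
        exact Real.rpow_le_rpow hx0.le hx (by norm_num)
      nlinarith [Real.rpow_nonneg hx0.le (3-1:ℝ)]
    · simp

lemma gamma52_pos : 0 < Real.Gamma (5/2) := Real.Gamma_pos_of_pos (by norm_num)

lemma tail_gg {s : ℝ} (hs : 0 < s) :
    genGammaMeasure 5 2 (Set.Iic s) ≤ ENNReal.ofReal (2 / Real.Gamma (5/2) * s ^ (5:ℝ)) := by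
  set c := 2 / Real.Gamma (5/2) with hc
  have hc0 : 0 < c := by positivity
  calc genGammaMeasure 5 2 (Set.Iic s) ≤ ENNReal.ofReal (c * s^(4:ℝ)) * volume (Set.Ioc 0 s) := ?_
      _ = ENNReal.ofReal (c * s ^ (5:ℝ)) := by
          rw [Real.volume_Ioc, ← ENNReal.ofReal_mul (by positivity)]
          congr 1
          rw [sub_zero, mul_assoc, show (5:ℝ) = ((5:ℕ):ℝ) by norm_num,
            show (4:ℝ) = ((4:ℕ):ℝ) by norm_num, Real.rpow_natCast, Real.rpow_natCast]
          ring
  refine wd_bound ?ms ?mt _ ?_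
  case ms => exact measurableSet_Iic
  case mt => exact measurableSet_Ioc
  · intro x hx
    simp only [Set.mem_Iic] at hx
    unfold genGammaPDFReal
    split_ifs with hcond
    · rw [Set.indicator_of_mem (by exact ⟨hcond, hx⟩)]
      apply ENNReal.ofReal_le_ofReal
      have hnorm : (2:ℝ) / Real.Gamma (5 / 2) = c := rfl
      rw [hnorm]
      have hexp : Real.exp (-(x ^ (2:ℝ))) ≤ 1 := by
        rw [Real.exp_le_one_iff, neg_nonpos]
        exact Real.rpow_nonneg hcond.le _
      have hx4 : x ^ (5 - 1 : ℝ) ≤ s ^ (4:ℝ) := by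
        rw [(by norm_num : (5:ℝ) - 1 = 4)]
        exact Real.rpow_le_rpow hcond.le hx (by norm_num)
      have hx4n : 0 ≤ x ^ (5 - 1 : ℝ) := Real.rpow_nonneg hcond.le _
      calc c * x ^ (5 - 1:ℝ) * Real.exp (-(x ^ (2:ℝ))) ≤ c * x ^ (5 - 1:ℝ) * 1 := by
            apply mul_le_mul_of_nonneg_left hexp (by positivity)
        _ ≤ c * s ^ (4:ℝ) := by rw [mul_one]; exact mul_le_mul_of_nonneg_left hx4 hc0.le
    · simp

lemma beta_null_nonpos (u v : ℝ) : _root_.betaMeasure u v (Set.Iic 0) = 0 :=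
  wd_zero measurableSet_Iic (fun x hx => by
    simp only [Set.mem_Iic] at hx
    unfold _root_.betaPDFReal
    rw [if_neg (by push_neg; intro h; linarith)])

lemma beta_null_ge_one (u v : ℝ) : _root_.betaMeasure u v (Set.Ici 1) = 0 :=
  wd_zero measurableSet_Ici (fun x hx => by
    simp only [Set.mem_Ici] at hx
    unfold _root_.betaPDFReal
    rw [if_neg (by push_neg; intro h; linarith)])

lemma gg_null_nonpos (u v : ℝ) : genGammaMeasure u v (Set.Iic 0) = 0 :=
  wd_zero measurableSet_Iic (fun x hx => by
    simp only [Set.mem_Iic] at hx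
    unfold genGammaPDFReal
    rw [if_neg (by linarith)])

lemma prod_tail_bound {Ω : Type*} [MeasurableSpace Ω] (P : Measure Ω) [IsProbabilityMeasure P]
    {X Y : Ω → ℝ} (hind : IndepFun X Y P)
    {a b C₁ C₂ γ : ℝ} (hC₁ : 0 ≤ C₁) (hC₂ : 0 ≤ C₂)
    {N : ℕ} (hN : 0 < N)
    (hγa : γ ≤ a)
    (hγ : ∀ i : ℕ, 1 ≤ i → i ≤ N → γ ≤ a * ((i:ℝ) - 1) / N + b * (1 - (i:ℝ)/N))
    (hXb : P {ω | 1 < X ω} = 0)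
    (hXt : ∀ s : ℝ, 0 < s → s ≤ 1 → P {ω | X ω ≤ s} ≤ ENNReal.ofReal (C₁ * s ^ a))
    (hYt : ∀ s : ℝ, 0 < s → s ≤ 1 → P {ω | Y ω ≤ s} ≤ ENNReal.ofReal (C₂ * s ^ b))
    {t : ℝ} (ht : 0 < t) (ht1 : t ≤ 1) :
    P {ω | X ω * Y ω ≤ t} ≤ ENNReal.ofReal ((C₁ + N * C₁ * C₂) * t ^ γ) := by
  classical
  have hNR : (0:ℝ) < N := by exact_mod_cast hN
  set A : ℕ → Set Ω :=
    fun i => X ⁻¹' (Set.Iic (t ^ (((i:ℝ) - 1)/N))) ∩ Y ⁻¹' (Set.Iic (t ^ (1 - (i:ℝ)/N)))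
    with hA
  have hcover : {ω | X ω * Y ω ≤ t} ⊆
      {ω | 1 < X ω} ∪ ({ω | X ω ≤ t} ∪ ⋃ i ∈ Finset.Icc 1 N, A i) := by
    intro ω hω
    simp only [Set.mem_setOf_eq] at hω
    by_cases hX1 : 1 < X ω
    · exact Or.inl hX1
    refine Or.inr ?_
    by_cases hXt' : X ω ≤ t
    · exact Or.inl hXt'
    refine Or.inr ?_
    push_neg at hX1 hXt'
    have hexists : ∃ j : ℕ, t ^ ((j:ℝ)/N) < X ω :=
      ⟨N, by rw [div_self hNR.ne', Real.rpow_one]; exact hXt'⟩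
    set i := Nat.find hexists with hidef
    have hi_spec : t ^ ((i:ℝ)/N) < X ω := Nat.find_spec hexists
    have hiN : i ≤ N := Nat.find_min' hexists
      (by rw [div_self hNR.ne', Real.rpow_one]; exact hXt')
    have hi1 : 1 ≤ i := by
      rcases Nat.eq_zero_or_pos i with h0 | h
      · exfalso
        have h2 := hi_spec
        rw [h0] at h2
        simp only [Nat.cast_zero, zero_div, Real.rpow_zero] at h2
        linarith
      · exact h
    have hXle : X ω ≤ t ^ (((i:ℝ) - 1)/N) := by
      have hmin := Nat.find_min hexists (m := i - 1) (by omega)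
      push_neg at hmin
      have hcast : (((i - 1 : ℕ)):ℝ) = (i:ℝ) - 1 := by
        push_cast [Nat.cast_sub hi1]
        ring
      rwa [hcast] at hmin
    have hXpos : 0 < X ω := lt_trans (Real.rpow_pos_of_pos ht _) hi_spec
    have hYle : Y ω ≤ t ^ (1 - (i:ℝ)/N) := by
      have hY : Y ω ≤ t / X ω := by
        rw [le_div_iff₀ hXpos]
        linarith [mul_comm (X ω) (Y ω)]
      have h2 : t / X ω ≤ t / t ^ ((i:ℝ)/N) :=
        div_le_div_of_nonneg_left ht.le (Real.rpow_pos_of_pos ht _) hi_spec.le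
      have h3 : t / t ^ ((i:ℝ)/N) = t ^ (1 - (i:ℝ)/N) := by
        rw [Real.rpow_sub ht, Real.rpow_one]
      linarith
    exact Set.mem_biUnion (Finset.mem_Icc.mpr ⟨hi1, hiN⟩) ⟨hXle, hYle⟩
  have hmain : ∀ i ∈ Finset.Icc 1 N, P (A i) ≤ ENNReal.ofReal (C₁ * C₂ * t ^ γ) := by
    intro i hi
    rw [Finset.mem_Icc] at hi
    have hi1 : (1:ℝ) ≤ (i:ℝ) := by exact_mod_cast hi.1
    have hiN : (i:ℝ) ≤ (N:ℝ) := by exact_mod_cast hi.2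
    set u : ℝ := ((i:ℝ) - 1)/N with hu_def
    set v : ℝ := 1 - (i:ℝ)/N with hv_def
    have hu : (0:ℝ) ≤ u := div_nonneg (by linarith) hNR.le
    have hv : (0:ℝ) ≤ v := by
      rw [hv_def, sub_nonneg, div_le_one hNR]
      exact hiN
    have hs1pos : 0 < t ^ u := Real.rpow_pos_of_pos ht _
    have hs1le : t ^ u ≤ 1 := Real.rpow_le_one ht.le ht1 hu
    have hs2pos : 0 < t ^ v := Real.rpow_pos_of_pos ht _
    have hs2le : t ^ v ≤ 1 := Real.rpow_le_one ht.le ht1 hv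
    have hsplit : P (A i) = P (X ⁻¹' (Set.Iic (t ^ u))) * P (Y ⁻¹' (Set.Iic (t ^ v))) :=
      hind.measure_inter_preimage_eq_mul _ _ measurableSet_Iic measurableSet_Iic
    rw [hsplit]
    have hX' : P (X ⁻¹' (Set.Iic (t ^ u))) ≤ ENNReal.ofReal (C₁ * (t ^ u) ^ a) :=
      hXt _ hs1pos hs1le
    have hY' : P (Y ⁻¹' (Set.Iic (t ^ v))) ≤ ENNReal.ofReal (C₂ * (t ^ v) ^ b) :=
      hYt _ hs2pos hs2le
    calc P (X ⁻¹' (Set.Iic (t ^ u))) * P (Y ⁻¹' (Set.Iic (t ^ v)))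
        ≤ ENNReal.ofReal (C₁ * (t ^ u) ^ a) * ENNReal.ofReal (C₂ * (t ^ v) ^ b) :=
          mul_le_mul' hX' hY'
      _ = ENNReal.ofReal (C₁ * C₂ * (t ^ (u * a + v * b))) := by
          rw [← ENNReal.ofReal_mul (by positivity), ← Real.rpow_mul ht.le, ← Real.rpow_mul ht.le,
            Real.rpow_add ht]
          ring_nf
      _ ≤ ENNReal.ofReal (C₁ * C₂ * t ^ γ) := by
          apply ENNReal.ofReal_le_ofReal
          apply mul_le_mul_of_nonneg_left _ (by positivity)
          apply Real.rpow_le_rpow_of_exponent_ge ht ht1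
          have := hγ i hi.1 hi.2
          rw [hu_def, hv_def]
          calc γ ≤ a * ((i:ℝ) - 1) / N + b * (1 - (i:ℝ)/N) := this
            _ = ((i:ℝ) - 1)/N * a + (1 - (i:ℝ)/N) * b := by ring
  have hXtail : P {ω | X ω ≤ t} ≤ ENNReal.ofReal (C₁ * t ^ γ) := by
    calc P {ω | X ω ≤ t} ≤ ENNReal.ofReal (C₁ * t ^ a) := hXt t ht ht1
      _ ≤ ENNReal.ofReal (C₁ * t ^ γ) := by
          apply ENNReal.ofReal_le_ofReal
          exact mul_le_mul_of_nonneg_left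
            (Real.rpow_le_rpow_of_exponent_ge ht ht1 hγa) hC₁
  calc P {ω | X ω * Y ω ≤ t}
      ≤ P ({ω | 1 < X ω} ∪ ({ω | X ω ≤ t} ∪ ⋃ i ∈ Finset.Icc 1 N, A i)) :=
        measure_mono hcover
    _ ≤ P {ω | 1 < X ω} + P ({ω | X ω ≤ t} ∪ ⋃ i ∈ Finset.Icc 1 N, A i) :=
        measure_union_le _ _
    _ ≤ 0 + (P {ω | X ω ≤ t} + P (⋃ i ∈ Finset.Icc 1 N, A i)) := by
        rw [hXb]
        exact add_le_add le_rfl (measure_union_le _ _)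
    _ = P {ω | X ω ≤ t} + P (⋃ i ∈ Finset.Icc 1 N, A i) := by rw [zero_add]
    _ ≤ ENNReal.ofReal (C₁ * t ^ γ) + ∑ i ∈ Finset.Icc 1 N, P (A i) :=
        add_le_add hXtail (measure_biUnion_finset_le _ _)
    _ ≤ ENNReal.ofReal (C₁ * t ^ γ) + ∑ _i ∈ Finset.Icc 1 N, ENNReal.ofReal (C₁ * C₂ * t ^ γ) :=
        add_le_add le_rfl (Finset.sum_le_sum hmain)
    _ = ENNReal.ofReal (C₁ * t ^ γ) + N * ENNReal.ofReal (C₁ * C₂ * t ^ γ) := by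
        rw [Finset.sum_const, Nat.card_Icc]
        simp [nsmul_eq_mul]
    _ = ENNReal.ofReal ((C₁ + N * C₁ * C₂) * t ^ γ) := by
        rw [← ENNReal.ofReal_natCast N, ← ENNReal.ofReal_mul (Nat.cast_nonneg N),
          ← ENNReal.ofReal_add (by positivity) (by positivity)]
        congr 1
        ring

set_option maxHeartbeats 2000000 in
/-- For every `η ∈ (0,1)` there is `ε₀ > 0` so that for all `ε ∈ (0,ε₀)`,
`P(D₁D₂² ≤ ε ∧ D₁²D₂ ≤ ε) ≤ ε^(1-η)`, where `D₁ = B₁B₂Z₃` and `D₂ = (1-B₁)B₂Z₃`. -/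
theorem adam_or_eve_large {Ω : Type*} [MeasurableSpace Ω] (P : Measure Ω) [IsProbabilityMeasure P]
    (B₁ B₂ Z₃ : Ω → ℝ) (hB₁ : Measurable B₁) (hB₂ : Measurable B₂) (hZ₃ : Measurable Z₃)
    (hindep : iIndepFun ![B₁, B₂, Z₃] P)
    (hlaw₁ : P.map B₁ = _root_.betaMeasure 1 2)
    (hlaw₂ : P.map B₂ = _root_.betaMeasure 3 1)
    (hlaw₃ : P.map Z₃ = genGammaMeasure 5 2) :
    ∀ η : ℝ, 0 < η → η < 1 → ∃ ε₀ : ℝ, 0 < ε₀ ∧ ∀ ε : ℝ, 0 < ε → ε < ε₀ →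
      P {ω | (B₁ ω * B₂ ω * Z₃ ω) * ((1 - B₁ ω) * B₂ ω * Z₃ ω) ^ 2 ≤ ε ∧
             (B₁ ω * B₂ ω * Z₃ ω) ^ 2 * ((1 - B₁ ω) * B₂ ω * Z₃ ω) ≤ ε}
        ≤ ENNReal.ofReal (ε ^ ((1 : ℝ) - η)) := by
  intro η hη hη1
  classical
  -- choose N
  set N : ℕ := ⌈(4:ℝ)/η⌉₊ with hNdef
  have hN4 : (4:ℝ)/η ≤ (N:ℝ) := Nat.le_ceil _
  have hNpos : (0:ℝ) < (N:ℝ) := lt_of_lt_of_le (by positivity) hN4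
  have hN : 0 < N := by exact_mod_cast hNpos
  have h2N : 2/(N:ℝ) ≤ η/2 := by
    rw [div_le_div_iff₀ hNpos (by norm_num)]
    have h4 : η * (4/η) = 4 := by field_simp
    nlinarith [mul_le_mul_of_nonneg_left hN4 hη.le]
  have hΓ : 0 < Real.Gamma (5/2) := gamma52_pos
  set c3 : ℝ := 2 / Real.Gamma (5/2) with hc3
  have hc3pos : 0 < c3 := by positivity
  set cW : ℝ := 3 + (N:ℝ) * 3 * c3 with hcW
  have hcWpos : 0 < cW := by positivity
  -- marginal tails
  have hB₂tail : ∀ s : ℝ, 0 < s → s ≤ 1 →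
      P {ω | B₂ ω ≤ s} ≤ ENNReal.ofReal (3 * s ^ (3:ℝ)) := by
    intro s hs _
    have : P {ω | B₂ ω ≤ s} = (P.map B₂) (Set.Iic s) := by
      rw [Measure.map_apply hB₂ measurableSet_Iic]; rfl
    rw [this, hlaw₂]
    exact tail_beta31 hs
  have hZtail : ∀ s : ℝ, 0 < s → s ≤ 1 →
      P {ω | Z₃ ω ≤ s} ≤ ENNReal.ofReal (c3 * s ^ (5:ℝ)) := by
    intro s hs _
    have : P {ω | Z₃ ω ≤ s} = (P.map Z₃) (Set.Iic s) := by
      rw [Measure.map_apply hZ₃ measurableSet_Iic]; rfl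
    rw [this, hlaw₃]
    exact tail_gg hs
  have hB₂gt1 : P {ω | 1 < B₂ ω} = 0 := by
    have h0 : P (B₂ ⁻¹' (Set.Ici 1)) = 0 := by
      rw [← Measure.map_apply hB₂ measurableSet_Ici, hlaw₂]
      exact beta_null_ge_one 3 1
    have hsub : {ω | 1 < B₂ ω} ⊆ B₂ ⁻¹' (Set.Ici 1) := by
      intro ω hω
      simp only [Set.mem_setOf_eq] at hω
      simp only [Set.mem_preimage, Set.mem_Ici]
      exact le_of_lt hω
    exact measure_mono_null hsub h0
  have hmeas : ∀ i, Measurable (![B₁, B₂, Z₃] i) := by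
    intro i; fin_cases i <;> simpa using ‹_›
  -- step 1 : tail of W = B₂ Z₃
  have hindW : IndepFun B₂ Z₃ P := hindep.indepFun (show (1 : Fin 3) ≠ 2 by decide)
  have hW : ∀ r : ℝ, 0 < r → r ≤ 1 →
      P {ω | B₂ ω * Z₃ ω ≤ r} ≤ ENNReal.ofReal (cW * r ^ (3 - 3/(N:ℝ))) := by
    intro r hr hr1
    have h := prod_tail_bound P hindW (a := 3) (b := 5) (C₁ := 3) (C₂ := c3)
      (γ := 3 - 3/(N:ℝ)) (by norm_num) hc3pos.le hN
      (by have : 0 ≤ 3/(N:ℝ) := by positivity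
          linarith)
      (by intro i hi1 hiN
          have hi1' : (1:ℝ) ≤ (i:ℝ) := by exact_mod_cast hi1
          have hiN' : (i:ℝ) ≤ (N:ℝ) := by exact_mod_cast hiN
          have key : 3 * ((i:ℝ) - 1) / N + 5 * (1 - (i:ℝ)/N) - (3 - 3/(N:ℝ))
              = 2*((N:ℝ) - i)/N := by
            field_simp
            ring
          have hn : 0 ≤ 2*((N:ℝ) - i)/N := by
            apply div_nonneg _ hNpos.le
            linarith
          linarith)
      hB₂gt1 hB₂tail hZtail hr hr1
    calc P {ω | B₂ ω * Z₃ ω ≤ r} ≤ ENNReal.ofReal ((3 + N * 3 * c3) * r ^ (3 - 3/(N:ℝ))) := h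
      _ = ENNReal.ofReal (cW * r ^ (3 - 3/(N:ℝ))) := by rw [hcW]
  -- step 2 : X = min(B₁, 1-B₁), Y = (B₂ Z₃)^3
  set X : Ω → ℝ := fun ω => min (B₁ ω) (1 - B₁ ω) with hXdef
  set Y : Ω → ℝ := fun ω => (B₂ ω * Z₃ ω) ^ 3 with hYdef
  have hindXY : IndepFun X Y P := by
    have h0 : IndepFun (fun ω => (B₂ ω, Z₃ ω)) B₁ P := by
      have := hindep.indepFun_prodMk hmeas 1 2 0 (by decide) (by decide)
      simpa using this
    have h1 := (h0.symm).comp (φ := fun x : ℝ => min x (1 - x))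
      (ψ := fun p : ℝ × ℝ => (p.1 * p.2) ^ 3)
      (measurable_id.min (measurable_const.sub measurable_id))
      ((measurable_fst.mul measurable_snd).pow_const 3)
    exact h1
  have hXgt1 : P {ω | 1 < X ω} = 0 := by
    have h0 : P (B₁ ⁻¹' (Set.Ici 1)) = 0 := by
      rw [← Measure.map_apply hB₁ measurableSet_Ici, hlaw₁]
      exact beta_null_ge_one 1 2
    have hsub : {ω | 1 < X ω} ⊆ B₁ ⁻¹' (Set.Ici 1) := by
      intro ω hω
      simp only [hXdef, Set.mem_setOf_eq, lt_min_iff] at hω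
      exact le_of_lt hω.1
    exact measure_mono_null hsub h0
  have hXtail : ∀ s : ℝ, 0 < s → s ≤ 1 →
      P {ω | X ω ≤ s} ≤ ENNReal.ofReal (4 * s ^ (1:ℝ)) := by
    intro s hs _
    have hsub : {ω | X ω ≤ s} ⊆ (B₁ ⁻¹' (Set.Iic s)) ∪ (B₁ ⁻¹' (Set.Ici (1 - s))) := by
      intro ω hω
      simp only [hXdef, Set.mem_setOf_eq, min_le_iff] at hω
      rcases hω with h | h
      · exact Or.inl h
      · exact Or.inr (by simp only [Set.mem_preimage, Set.mem_Ici]; linarith)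
    calc P {ω | X ω ≤ s} ≤ P (B₁ ⁻¹' (Set.Iic s)) + P (B₁ ⁻¹' (Set.Ici (1 - s))) :=
          le_trans (measure_mono hsub) (measure_union_le _ _)
      _ ≤ ENNReal.ofReal (2*s) + ENNReal.ofReal (2*s) := by
          apply add_le_add
          · rw [← Measure.map_apply hB₁ measurableSet_Iic, hlaw₁]
            exact tail_beta12_low hs.le
          · rw [← Measure.map_apply hB₁ measurableSet_Ici, hlaw₁]
            exact tail_beta12_high hs.le
      _ = ENNReal.ofReal (4 * s ^ (1:ℝ)) := by
          rw [← ENNReal.ofReal_add (by positivity) (by positivity), Real.rpow_one]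
          congr 1; ring
  have hYtail : ∀ s : ℝ, 0 < s → s ≤ 1 →
      P {ω | Y ω ≤ s} ≤ ENNReal.ofReal (cW * s ^ (1 - 1/(N:ℝ))) := by
    intro s hs hs1
    set r : ℝ := s ^ ((1:ℝ)/3) with hrdef
    have hr : 0 < r := Real.rpow_pos_of_pos hs _
    have hr1 : r ≤ 1 := Real.rpow_le_one hs.le hs1 (by norm_num)
    have hr3 : r ^ (3:ℕ) = s := by
      rw [hrdef, ← Real.rpow_natCast (s ^ ((1:ℝ)/3)) 3, ← Real.rpow_mul hs.le]
      norm_num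
    have hset : {ω | Y ω ≤ s} = {ω | B₂ ω * Z₃ ω ≤ r} := by
      ext ω
      simp only [hYdef, Set.mem_setOf_eq]
      rw [← hr3]
      have hmono : StrictMono (fun a : ℝ => a ^ (3:ℕ)) := Odd.strictMono_pow ⟨1, by norm_num⟩
      exact hmono.le_iff_le
    rw [hset]
    calc P {ω | B₂ ω * Z₃ ω ≤ r} ≤ ENNReal.ofReal (cW * r ^ (3 - 3/(N:ℝ))) := hW r hr hr1
      _ = ENNReal.ofReal (cW * s ^ (1 - 1/(N:ℝ))) := by
          congr 1
          rw [hrdef, ← Real.rpow_mul hs.le]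
          congr 1
          field_simp
  -- the product bound for X * Y
  have hXY : ∀ t : ℝ, 0 < t → t ≤ 1 →
      P {ω | X ω * Y ω ≤ t} ≤ ENNReal.ofReal ((4 + (N:ℝ) * 4 * cW) * t ^ (1 - 2/(N:ℝ))) := by
    intro t ht ht1
    exact prod_tail_bound P hindXY (a := 1) (b := 1 - 1/(N:ℝ)) (C₁ := 4) (C₂ := cW)
      (γ := 1 - 2/(N:ℝ)) (by norm_num) hcWpos.le hN
      (by have : 0 ≤ 2/(N:ℝ) := by positivity
          linarith)
      (by intro i hi1 hiN
          have hi1' : (1:ℝ) ≤ (i:ℝ) := by exact_mod_cast hi1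
          have hiN' : (i:ℝ) ≤ (N:ℝ) := by exact_mod_cast hiN
          have key : 1 * ((i:ℝ) - 1) / N + (1 - 1/(N:ℝ)) * (1 - (i:ℝ)/N) - (1 - 2/(N:ℝ))
              = (i:ℝ)/((N:ℝ)*N) := by
            field_simp
            ring
          have hn : 0 ≤ (i:ℝ)/((N:ℝ)*N) := by positivity
          linarith)
      hXgt1 hXtail hYtail ht ht1
  -- bad set
  set bad : Set Ω := B₁ ⁻¹' (Set.Iic 0) ∪ B₁ ⁻¹' (Set.Ici 1) ∪ B₂ ⁻¹' (Set.Iic 0)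
      ∪ Z₃ ⁻¹' (Set.Iic 0) with hbad
  have hbad0 : P bad = 0 := by
    rw [hbad]
    refine measure_union_null (measure_union_null (measure_union_null ?_ ?_) ?_) ?_
    · rw [← Measure.map_apply hB₁ measurableSet_Iic, hlaw₁]; exact beta_null_nonpos 1 2
    · rw [← Measure.map_apply hB₁ measurableSet_Ici, hlaw₁]; exact beta_null_ge_one 1 2
    · rw [← Measure.map_apply hB₂ measurableSet_Iic, hlaw₂]; exact beta_null_nonpos 3 1
    · rw [← Measure.map_apply hZ₃ measurableSet_Iic, hlaw₃]; exact gg_null_nonpos 5 2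
  -- constants for the final estimate
  set K : ℝ := (4 + (N:ℝ) * 4 * cW) * 4 with hK
  have hKpos : 0 < K := by positivity
  set δ : ℝ := η - 2/(N:ℝ) with hδdef
  have hδ : 0 < δ := by rw [hδdef]; linarith
  refine ⟨min (1/4) ((1/K) ^ ((1:ℝ)/δ)), lt_min (by norm_num) (Real.rpow_pos_of_pos (by positivity) _), ?_⟩
  intro ε hε hε₀
  have hε4 : 4 * ε < 1 := by
    have := lt_of_lt_of_le hε₀ (min_le_left _ _)
    linarith
  have hε4pos : 0 < 4 * ε := by linarith
  -- event inclusion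
  have hincl : {ω | (B₁ ω * B₂ ω * Z₃ ω) * ((1 - B₁ ω) * B₂ ω * Z₃ ω) ^ 2 ≤ ε ∧
             (B₁ ω * B₂ ω * Z₃ ω) ^ 2 * ((1 - B₁ ω) * B₂ ω * Z₃ ω) ≤ ε}
      ⊆ bad ∪ {ω | X ω * Y ω ≤ 4 * ε} := by
    intro ω hω
    simp only [Set.mem_setOf_eq] at hω
    by_cases hb : ω ∈ bad
    · exact Or.inl hb
    refine Or.inr ?_
    rw [hbad] at hb
    simp only [Set.mem_union, Set.mem_preimage, Set.mem_Iic, Set.mem_Ici, not_or, not_le] at hb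
    obtain ⟨⟨⟨hb1, hb2⟩, hb3⟩, hb4⟩ := hb
    set w : ℝ := B₂ ω * Z₃ ω with hwdef
    have hw : 0 < w := mul_pos hb3 hb4
    simp only [Set.mem_setOf_eq, hXdef, hYdef, ← hwdef]
    rcases le_total (B₁ ω) (1 - B₁ ω) with hc | hc
    · rw [min_eq_left hc]
      have h12 : (1:ℝ) ≤ 2 * (1 - B₁ ω) := by linarith
      have hkey : B₁ ω * w ^ 3 * 1 ≤ B₁ ω * w ^ 3 * (2 * (1 - B₁ ω)) ^ 2 := by
        apply mul_le_mul_of_nonneg_left _ (mul_nonneg hb1.le (pow_nonneg hw.le 3))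
        nlinarith
      have hring : B₁ ω * w ^ 3 * (2 * (1 - B₁ ω)) ^ 2
          = 4 * ((B₁ ω * B₂ ω * Z₃ ω) * ((1 - B₁ ω) * B₂ ω * Z₃ ω) ^ 2) := by
        rw [hwdef]; ring
      rw [hring] at hkey
      rw [mul_one] at hkey
      calc B₁ ω * w ^ 3 ≤ 4 * ((B₁ ω * B₂ ω * Z₃ ω) * ((1 - B₁ ω) * B₂ ω * Z₃ ω) ^ 2) := hkey
        _ ≤ 4 * ε := by linarith [hω.1]
    · rw [min_eq_right hc]
      have h12 : (1:ℝ) ≤ 2 * B₁ ω := by linarith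
      have hkey : (1 - B₁ ω) * w ^ 3 * 1 ≤ (1 - B₁ ω) * w ^ 3 * (2 * B₁ ω) ^ 2 := by
        apply mul_le_mul_of_nonneg_left _ (mul_nonneg (by linarith) (pow_nonneg hw.le 3))
        nlinarith
      have hring : (1 - B₁ ω) * w ^ 3 * (2 * B₁ ω) ^ 2
          = 4 * ((B₁ ω * B₂ ω * Z₃ ω) ^ 2 * ((1 - B₁ ω) * B₂ ω * Z₃ ω)) := by
        rw [hwdef]; ring
      rw [hring] at hkey
      rw [mul_one] at hkey
      calc (1 - B₁ ω) * w ^ 3 ≤ 4 * ((B₁ ω * B₂ ω * Z₃ ω) ^ 2 * ((1 - B₁ ω) * B₂ ω * Z₃ ω)) := hkey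
        _ ≤ 4 * ε := by linarith [hω.2]
  -- final numeric estimate
  have hnum : (4 + (N:ℝ) * 4 * cW) * (4 * ε) ^ (1 - 2/(N:ℝ)) ≤ ε ^ ((1:ℝ) - η) := by
    have hsplit4 : ((4:ℝ) * ε) ^ (1 - 2/(N:ℝ)) = 4 ^ (1 - 2/(N:ℝ)) * ε ^ (1 - 2/(N:ℝ)) :=
      Real.mul_rpow (by norm_num) hε.le
    have h4le : (4:ℝ) ^ (1 - 2/(N:ℝ)) ≤ 4 := by
      have h2N0 : (0:ℝ) ≤ 2/(N:ℝ) := by positivity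
      calc (4:ℝ) ^ (1 - 2/(N:ℝ)) ≤ 4 ^ (1:ℝ) :=
            Real.rpow_le_rpow_of_exponent_le (by norm_num) (by linarith)
        _ = 4 := Real.rpow_one 4
    have hεsplit : ε ^ (1 - 2/(N:ℝ)) = ε ^ ((1:ℝ) - η) * ε ^ δ := by
      rw [← Real.rpow_add hε]
      congr 1
      rw [hδdef]; ring
    have hεδ : ε ^ δ ≤ 1/K := by
      have hεle : ε ≤ (1/K) ^ ((1:ℝ)/δ) :=
        le_of_lt (lt_of_lt_of_le hε₀ (min_le_right _ _))
      calc ε ^ δ ≤ ((1/K) ^ ((1:ℝ)/δ)) ^ δ := Real.rpow_le_rpow hε.le hεle hδ.le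
        _ = (1/K) ^ (((1:ℝ)/δ) * δ) := by rw [← Real.rpow_mul (by positivity)]
        _ = 1/K := by
            rw [show ((1:ℝ)/δ) * δ = 1 by field_simp, Real.rpow_one]
    have hbase : 0 ≤ ε ^ ((1:ℝ) - η) := Real.rpow_nonneg hε.le _
    calc (4 + (N:ℝ) * 4 * cW) * (4 * ε) ^ (1 - 2/(N:ℝ))
        = (4 + (N:ℝ) * 4 * cW) * (4 ^ (1 - 2/(N:ℝ)) * ε ^ (1 - 2/(N:ℝ))) := by rw [hsplit4]
      _ ≤ (4 + (N:ℝ) * 4 * cW) * (4 * ε ^ (1 - 2/(N:ℝ))) := by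
          apply mul_le_mul_of_nonneg_left _ (by positivity)
          apply mul_le_mul_of_nonneg_right h4le (Real.rpow_nonneg hε.le _)
      _ = K * ε ^ (1 - 2/(N:ℝ)) := by rw [hK]; ring
      _ = ε ^ ((1:ℝ) - η) * (K * ε ^ δ) := by rw [hεsplit]; ring
      _ ≤ ε ^ ((1:ℝ) - η) * 1 := by
          apply mul_le_mul_of_nonneg_left _ hbase
          calc K * ε ^ δ ≤ K * (1/K) := mul_le_mul_of_nonneg_left hεδ hKpos.le
            _ = 1 := by field_simp
      _ = ε ^ ((1:ℝ) - η) := by rw [mul_one]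
  calc P {ω | (B₁ ω * B₂ ω * Z₃ ω) * ((1 - B₁ ω) * B₂ ω * Z₃ ω) ^ 2 ≤ ε ∧
             (B₁ ω * B₂ ω * Z₃ ω) ^ 2 * ((1 - B₁ ω) * B₂ ω * Z₃ ω) ≤ ε}
      ≤ P (bad ∪ {ω | X ω * Y ω ≤ 4 * ε}) := measure_mono hincl
    _ ≤ P bad + P {ω | X ω * Y ω ≤ 4 * ε} := measure_union_le _ _
    _ = P {ω | X ω * Y ω ≤ 4 * ε} := by rw [hbad0, zero_add]
    _ ≤ ENNReal.ofReal ((4 + (N:ℝ) * 4 * cW) * (4 * ε) ^ (1 - 2/(N:ℝ))) :=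
        hXY (4 * ε) hε4pos hε4.le
    _ ≤ ENNReal.ofReal (ε ^ ((1:ℝ) - η)) := ENNReal.ofReal_le_ofReal hnum
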